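/- Let m ≥ 2 and let 0 ≤ a_1 < a_2 < … < a_m be real numbers. Let n, l be positive integers with γ := n/l > 1, and let β = (β_1, …, β_m) be a vector of nonnegative integers with ∑_{k=1}^m β_k = n and β_k < n for every k (so that at least two entries of β are nonzero). Then (∑_{k=1}^m (β_k/l) a_k)² − ∑_{k=1}^m (β_k/l) a_k² < a_m² · γ(γ−1). -/
import Mathlib


open Finset

/-- Key exponent estimate: for `0 ≤ a_1 < … < a_m`, `γ = n/l > 1` and a multi-index `β` with
`∑ β_k = n` and `β_k < n` for every `k`,
`(∑_k (β_k/l) a_k)² − ∑_k (β_k/l) a_k² < a_m² γ(γ−1)`. -/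
theorem stmt_14 (m : ℕ) (hm : 2 ≤ m) (a : Fin m → ℝ)
    (ha0 : 0 ≤ a ⟨0, by omega⟩) (hmono : StrictMono a)
    (n l : ℕ) (hn : 0 < n) (hl : 0 < l)
    (γ : ℝ) (hγ : γ = (n : ℝ) / l) (hγ1 : 1 < γ)
    (β : Fin m → ℕ) (hβsum : ∑ k, β k = n) (hβ : ∀ k, β k < n) :
    (∑ k, ((β k : ℝ) / l) * a k) ^ 2 - ∑ k, ((β k : ℝ) / l) * a k ^ 2
      < a ⟨m - 1, by omega⟩ ^ 2 * (γ * (γ - 1)) := by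
  set c : Fin m → ℝ := fun k => (β k : ℝ) / l with hc
  have hl' : (0 : ℝ) < l := by exact_mod_cast hl
  have hcnn : ∀ k, 0 ≤ c k := fun k => by positivity
  set A : ℝ := a ⟨m - 1, by omega⟩ with hA
  -- all a-values nonneg and ≤ A
  have hanum : ∀ k : Fin m, 0 ≤ a k := by
    intro k
    exact ha0.trans (hmono.monotone (by simp [Fin.le_def]))
  have haA : ∀ k : Fin m, a k ≤ A := by
    intro k
    exact hmono.monotone (by simp [Fin.le_def]; omega)
  have hApos : 0 < A := by
    have : a ⟨0, by omega⟩ < A := hmono (by simp [Fin.lt_def]; omega)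
    linarith
  -- γ is the sum of c
  have hγsum : γ = ∑ k, c k := by
    rw [hγ, ← hβsum, hc]
    push_cast
    rw [Finset.sum_div]
  -- two distinct indices in support
  obtain ⟨i, hi⟩ : ∃ i, 0 < β i := by
    by_contra h
    push_neg at h
    simp only [Nat.le_zero] at h
    have : ∑ k, β k = 0 := Finset.sum_eq_zero fun k _ => h k
    omega
  obtain ⟨j, hij, hj⟩ : ∃ j, j ≠ i ∧ 0 < β j := by
    by_contra h
    push_neg at h
    have : ∑ k, β k = β i := by
      apply Finset.sum_eq_single
      · intro b _ hb
        have := h b hb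
        omega
      · simp
    have := hβ i
    omega
  have hci : 0 < c i := by
    have h : (0:ℝ) < β i := by exact_mod_cast hi
    positivity
  have hcj : 0 < c j := by
    have h : (0:ℝ) < β j := by exact_mod_cast hj
    positivity
  set S : ℝ := ∑ k, c k * a k with hS
  set Q : ℝ := ∑ k, c k * a k ^ 2 with hQ
  -- Cauchy–Schwarz with strictness
  have expand : ∑ p, ∑ q, c p * c q * (a p - a q)^2 = 2 * (γ * Q - S ^ 2) := by
    have hp : ∀ p : Fin m, ∑ q, c p * c q * (a p - a q)^2
        = c p * a p ^ 2 * (∑ q, c q) + c p * (∑ q, c q * a q ^ 2)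
          - c p * a p * (2 * ∑ q, c q * a q) := by
      intro p
      simp only [Finset.mul_sum]
      rw [← Finset.sum_add_distrib, ← Finset.sum_sub_distrib]
      exact Finset.sum_congr rfl fun q _ => by ring
    simp_rw [hp]
    rw [Finset.sum_sub_distrib, Finset.sum_add_distrib, ← Finset.sum_mul, ← Finset.sum_mul,
      ← Finset.sum_mul, hγsum, hS, hQ]
    ring
  have hpos : 0 < ∑ p, ∑ q, c p * c q * (a p - a q)^2 := by
    apply Finset.sum_pos'
    · intro p _
      apply Finset.sum_nonneg
      intro q _
      have := hcnn p; have := hcnn q; positivity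
    · refine ⟨i, Finset.mem_univ i, ?_⟩
      have hterm : 0 < c i * c j * (a i - a j)^2 := by
        have hne : a i - a j ≠ 0 := sub_ne_zero.mpr (hmono.injective.ne hij.symm)
        positivity
      calc (0:ℝ) < c i * c j * (a i - a j)^2 := hterm
        _ ≤ ∑ q, c i * c q * (a i - a q)^2 := by
            apply Finset.single_le_sum (f := fun q => c i * c q * (a i - a q)^2)
            · intro q _
              have := hcnn q; have := hci.le; positivity
            · exact Finset.mem_univ j
  have hCS : S ^ 2 < γ * Q := by nlinarith [expand ▸ hpos]
  have hSA : S ≤ γ * A := by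
    rw [hγsum, Finset.sum_mul, hS]
    apply Finset.sum_le_sum
    intro k _
    exact mul_le_mul_of_nonneg_left (haA k) (hcnn k)
  have hS0 : 0 ≤ S := Finset.sum_nonneg fun k _ => mul_nonneg (hcnn k) (hanum k)
  have hγ0 : 0 < γ := by linarith
  nlinarith [mul_self_le_mul_self hS0 hSA, sq_nonneg S, mul_pos hγ0 hApos]
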